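/- Let (x_n)_{n≥0} be a real sequence satisfying x_{n+1} = x_n·x_{n-1} − x_{n-2} for all n ≥ 2. If there exists N ≥ 0 such that 2 < |x_N|, |x_N| < |x_{N+1}|, and |x_{N+1}| < |x_{N+2}|, then |x_n| > 2 for all n ≥ N and |x_n| → ∞ as n → ∞. -/

import Mathlib

open Filter

/-- If an orbit of the recursion `x_{n+1} = x_n x_{n-1} - x_{n-2}` has three successively
growing terms beyond the threshold 2, then it stays above 2 and diverges. -/
theorem escape_criterion (x : ℕ → ℝ)
    (hrec : ∀ n : ℕ, x (n + 3) = x (n + 2) * x (n + 1) - x n)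
    (N : ℕ) (h1 : 2 < |x N|) (h2 : |x N| < |x (N + 1)|) (h3 : |x (N + 1)| < |x (N + 2)|) :
    (∀ n ≥ N, 2 < |x n|) ∧ Tendsto (fun n => |x n|) atTop atTop := by
  have habs : ∀ m : ℕ, |x (m + 2)| * |x (m + 1)| - |x m| ≤ |x (m + 3)| := by
    intro m
    calc |x (m + 2)| * |x (m + 1)| - |x m|
        = |x (m + 2) * x (m + 1)| - |x m| := by rw [abs_mul]
      _ ≤ |x (m + 2) * x (m + 1) - x m| := abs_sub_abs_le_abs_sub _ _
      _ = |x (m + 3)| := by rw [hrec m]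
  have key : ∀ n : ℕ, 2 < |x (N + n)| ∧ |x (N + n)| < |x (N + n + 1)| ∧
      |x (N + n + 1)| < |x (N + n + 2)| := by
    intro n
    induction n with
    | zero => exact ⟨h1, h2, h3⟩
    | succ k ih =>
      obtain ⟨ha, hab, hbc⟩ := ih
      have h4 := habs (N + k)
      refine ⟨show 2 < |x (N + k + 1)| by linarith, show |x (N + k + 1)| < |x (N + k + 2)| from hbc, ?_⟩
      show |x (N + k + 2)| < |x (N + k + 3)|
      nlinarith
  have step : ∀ k : ℕ, |x (N + k)| ≤ |x (N + k + 1)| := fun k => (key k).2.1.le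
  have mono : ∀ k l : ℕ, k ≤ l → |x (N + k)| ≤ |x (N + l)| := by
    intro k l hkl
    induction l with
    | zero => simp [Nat.le_zero.mp hkl]
    | succ m ih =>
      rcases Nat.lt_or_ge k (m + 1) with h | h
      · exact (ih (Nat.lt_succ_iff.mp h)).trans (step m)
      · have : k = m + 1 := le_antisymm hkl h
        simp [this]
  have hr : 1 < |x N| - 1 := by linarith
  have hc : 0 < |x (N + 2)| := by linarith
  have grow : ∀ k : ℕ, (|x N| - 1) ^ k * |x (N + 2)| ≤ |x (N + k + 2)| := by
    intro k
    induction k with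
    | zero => simp
    | succ m ih =>
      have h4 := habs (N + m)
      have h5 : |x (N + m)| ≤ |x (N + m + 2)| := mono m (m + 2) (by omega)
      have h6 : |x N| ≤ |x (N + m + 1)| := by
        have := mono 0 (m + 1) (by omega)
        simpa [← add_assoc] using this
      have h7 : 0 < |x (N + m + 2)| := lt_trans (by norm_num) (key (m + 2)).1
      have h8 : (0:ℝ) < (|x N| - 1) ^ m := by positivity
      show (|x N| - 1) ^ (m + 1) * |x (N + 2)| ≤ |x (N + m + 3)|
      rw [pow_succ]
      nlinarith [mul_le_mul_of_nonneg_left h6 h7.le]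
  constructor
  · intro n hn
    obtain ⟨k, rfl⟩ := Nat.exists_eq_add_of_le hn
    exact (key k).1
  · rw [tendsto_atTop]
    intro b
    have hpow : Tendsto (fun k : ℕ => (|x N| - 1) ^ k * |x (N + 2)|) atTop atTop :=
      (tendsto_pow_atTop_atTop_of_one_lt hr).atTop_mul_const hc
    obtain ⟨k, hk⟩ := (hpow.eventually_ge_atTop b).exists
    filter_upwards [eventually_ge_atTop (N + k + 2)] with n hn
    obtain ⟨j, rfl⟩ := Nat.exists_eq_add_of_le hn
    have h9 : N + k + 2 + j = N + (k + 2 + j) := by omega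
    rw [h9]
    have := mono (k + 2) (k + 2 + j) (by omega)
    have h10 : N + (k + 2) = N + k + 2 := by omega
    rw [h10] at this
    calc b ≤ (|x N| - 1) ^ k * |x (N + 2)| := hk
      _ ≤ |x (N + k + 2)| := grow k
      _ ≤ |x (N + (k + 2 + j))| := this
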